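/- Let n ≥ 4 be an even integer, let M_n be the Möbius ladder graph, and let ω = exp(2πi/n) ∈ ℂ. Then for every u ∈ ℂ, ζ_{M_n}(u)^{-1} = (1 − u²)^{n/2} · ∏_{k=0}^{n−1} (1 + 2u² − u·(ω^k + ω^{k·n/2} + ω^{k(n−1)})). Equivalently, det(I − A·u + Q·u²) = ∏_{k=0}^{n−1} (1 + 2u² − u·(ω^k + ω^{k·n/2} + ω^{k(n−1)})). -/

import Mathlib

open Matrix

/-- The Möbius ladder graph `M_n` on vertex set `ZMod n` (for `n` even): `i` is adjacent to
`j` exactly when `j - i ∈ {1, -1, n/2}`. -/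
def mobiusLadder (n : ℕ) : SimpleGraph (ZMod n) where
  Adj i j := i ≠ j ∧ (j - i = 1 ∨ i - j = 1 ∨ j - i = (n / 2 : ℕ) ∨ i - j = (n / 2 : ℕ))
  symm := ⟨by
    rintro i j ⟨h1, h2⟩
    exact ⟨h1.symm, by tauto⟩⟩
  loopless := ⟨fun i h => h.1 rfl⟩

noncomputable instance (n : ℕ) : DecidableRel (mobiusLadder n).Adj :=
  Classical.decRel _

section facts
set_option linter.unusedSectionVars false
variable {n : ℕ} [NeZero n] (hn : 4 ≤ n) (hev : Even n)

include hn hev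

lemma ML.ncast_ne (a b : ℕ) (ha : a < n) (hb : b < n) (hab : a ≠ b) :
    (a : ZMod n) ≠ (b : ZMod n) := by
  rw [Ne, ZMod.natCast_eq_natCast_iff]
  unfold Nat.ModEq
  rw [Nat.mod_eq_of_lt ha, Nat.mod_eq_of_lt hb]
  exact hab

lemma ML.one_ne : (1 : ZMod n) ≠ 0 := by
  have := ML.ncast_ne hn hev 1 0 (by omega) (by omega) (by omega)
  simpa using this

lemma ML.two_ne : (2 : ZMod n) ≠ 0 := by
  have := ML.ncast_ne hn hev 2 0 (by omega) (by omega) (by omega)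
  simpa using this

lemma ML.neg_half : -((n/2 : ℕ) : ZMod n) = ((n/2 : ℕ) : ZMod n) := by
  have h2 : n % 2 = 0 := Nat.even_iff.mp hev
  apply neg_eq_of_add_eq_zero_left
  rw [← Nat.cast_add]
  have : n/2 + n/2 = n := by omega
  rw [this, ZMod.natCast_self]

lemma ML.adj_iff (v j : ZMod n) :
    (mobiusLadder n).Adj v j ↔ j = v + 1 ∨ j = v - 1 ∨ j = v + ((n/2 : ℕ) : ZMod n) := by
  have h2 : n % 2 = 0 := Nat.even_iff.mp hev
  have h1 : (1 : ZMod n) ≠ 0 := ML.one_ne hn hev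
  have hm0 : ((n/2 : ℕ) : ZMod n) ≠ 0 := by
    have := ML.ncast_ne hn hev (n/2) 0 (by omega) (by omega) (by omega); simpa using this
  constructor
  · rintro ⟨hne, h | h | h | h⟩
    · left; rw [sub_eq_iff_eq_add] at h; rw [h]; ring
    · right; left; rw [sub_eq_iff_eq_add] at h
      rw [eq_sub_iff_add_eq]; rw [h]; ring
    · right; right; rw [sub_eq_iff_eq_add] at h; rw [h]; ring
    · right; right; rw [sub_eq_iff_eq_add] at h
      have : j = v - ((n/2:ℕ) : ZMod n) := by rw [h]; ring
      rw [this, sub_eq_add_neg, ML.neg_half hn hev]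
  · rintro (h | h | h) <;> subst h
    · refine ⟨fun h => h1 ?_, Or.inl (by ring)⟩; linear_combination -h
    · refine ⟨fun h => h1 ?_, Or.inr (Or.inl (by ring))⟩; linear_combination h
    · refine ⟨fun h => hm0 ?_, Or.inr (Or.inr (Or.inl (by ring)))⟩; linear_combination -h

lemma ML.nbhd (v : ZMod n) :
    (mobiusLadder n).neighborFinset v = {v + 1, v - 1, v + ((n/2 : ℕ) : ZMod n)} := by
  ext j
  simp [SimpleGraph.mem_neighborFinset, ML.adj_iff hn hev, Finset.mem_insert]

lemma ML.distinct (v : ZMod n) :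
    v + 1 ∉ ({v - 1, v + ((n/2 : ℕ) : ZMod n)} : Finset (ZMod n)) ∧
    v - 1 ∉ ({v + ((n/2 : ℕ) : ZMod n)} : Finset (ZMod n)) := by
  have h2 : n % 2 = 0 := Nat.even_iff.mp hev
  have hm1 : ((n/2 : ℕ) : ZMod n) ≠ 1 := by
    have := ML.ncast_ne hn hev (n/2) 1 (by omega) (by omega) (by omega); simpa using this
  have hm2 : ((n/2:ℕ) : ZMod n) + 1 ≠ 0 := by
    have := ML.ncast_ne hn hev (n/2 + 1) 0 (by omega) (by omega) (by omega)
    simpa using this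
  refine ⟨?_, ?_⟩
  · simp only [Finset.mem_insert, Finset.mem_singleton]
    push_neg
    exact ⟨fun h => ML.two_ne hn hev (by linear_combination h),
           fun h => hm1 (by linear_combination -h)⟩
  · simp only [Finset.mem_singleton]
    exact fun h => hm2 (by linear_combination -h)

lemma ML.deg (v : ZMod n) : (mobiusLadder n).degree v = 3 := by
  obtain ⟨hd1, hd2⟩ := ML.distinct hn hev v
  rw [SimpleGraph.degree, ML.nbhd hn hev,
    Finset.card_insert_of_notMem hd1, Finset.card_insert_of_notMem hd2,
    Finset.card_singleton]
end facts

section mat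
variable {n : ℕ} [NeZero n]

lemma ML.pow_mod {ω : ℂ} (h : ω ^ n = 1) (m : ℕ) : ω ^ m = ω ^ (m % n) := by
  conv_lhs => rw [← Nat.mod_add_div m n, pow_add, pow_mul, h, one_pow, mul_one]

noncomputable def ML.e (ω : ℂ) (a : ZMod n) : ℂ := ω ^ a.val

lemma ML.e_add {ω : ℂ} (h : ω ^ n = 1) (a b : ZMod n) :
    ML.e ω (a + b) = ML.e ω a * ML.e ω b := by
  unfold ML.e
  rw [← pow_add, ZMod.val_add, ← ML.pow_mod h]

lemma ML.e_nat {ω : ℂ} (h : ω ^ n = 1) (m : ℕ) : ML.e ω (m : ZMod n) = ω ^ m := by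
  unfold ML.e
  rw [ZMod.val_natCast, ← ML.pow_mod h]

lemma ML.e_val_mul {ω : ℂ} (h : ω ^ n = 1) (a b : ZMod n) :
    ML.e ω (a * b) = (ML.e ω a) ^ b.val := by
  unfold ML.e
  rw [ZMod.val_mul, ← ML.pow_mod h, ← pow_mul]

lemma ML.e_zero (ω : ℂ) : ML.e ω (0 : ZMod n) = 1 := by
  unfold ML.e; rw [ZMod.val_zero, pow_zero]

lemma ML.sum_val (f : ℕ → ℂ) : ∑ k : ZMod n, f k.val = ∑ m ∈ Finset.range n, f m := by
  refine Finset.sum_nbij' (fun k => k.val) (fun m => (m : ZMod n))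
    (fun a _ => Finset.mem_range.mpr (ZMod.val_lt a)) (fun m _ => Finset.mem_univ _)
    (fun a _ => ZMod.natCast_rightInverse a)
    (fun m hm => ZMod.val_cast_of_lt (Finset.mem_range.mp hm)) (fun a _ => rfl)

lemma ML.prod_univ (f : ZMod n → ℂ) :
    ∏ k : ZMod n, f k = ∏ m ∈ Finset.range n, f (m : ZMod n) := by
  refine Finset.prod_nbij' (fun k => k.val) (fun m => (m : ZMod n))
    (fun a _ => Finset.mem_range.mpr (ZMod.val_lt a)) (fun m _ => Finset.mem_univ _)
    (fun a _ => ZMod.natCast_rightInverse a)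
    (fun m hm => ZMod.val_cast_of_lt (Finset.mem_range.mp hm))
    (fun a _ => by rw [ZMod.natCast_rightInverse a])

end mat


theorem iharaZetaInv_mobiusLadder (n : ℕ) [NeZero n] (hn : 4 ≤ n) (hev : Even n) (u : ℂ) :
    ((1 - u ^ 2) ^ (n / 2) *
        ((1 : Matrix (ZMod n) (ZMod n) ℂ) - u • (mobiusLadder n).adjMatrix ℂ +
          (u ^ 2) • Matrix.diagonal (fun v => ((mobiusLadder n).degree v : ℂ) - 1)).det =
      (1 - u ^ 2) ^ (n / 2) *
        ∏ k ∈ Finset.range n,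
          (1 + 2 * u ^ 2 -
            u * (Complex.exp (2 * Real.pi * Complex.I / n) ^ k +
                 Complex.exp (2 * Real.pi * Complex.I / n) ^ (k * (n / 2)) +
                 Complex.exp (2 * Real.pi * Complex.I / n) ^ (k * (n - 1))))) ∧
    ((1 : Matrix (ZMod n) (ZMod n) ℂ) - u • (mobiusLadder n).adjMatrix ℂ +
        (u ^ 2) • Matrix.diagonal (fun v => ((mobiusLadder n).degree v : ℂ) - 1)).det =
      ∏ k ∈ Finset.range n,
        (1 + 2 * u ^ 2 -
          u * (Complex.exp (2 * Real.pi * Complex.I / n) ^ k +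
               Complex.exp (2 * Real.pi * Complex.I / n) ^ (k * (n / 2)) +
               Complex.exp (2 * Real.pi * Complex.I / n) ^ (k * (n - 1)))) := by
  set ω : ℂ := Complex.exp (2 * Real.pi * Complex.I / n) with hωdef
  have hω : IsPrimitiveRoot ω n := Complex.isPrimitiveRoot_exp n (NeZero.ne n)
  have h1 : ω ^ n = 1 := hω.pow_eq_one
  set M : Matrix (ZMod n) (ZMod n) ℂ :=
    (1 : Matrix (ZMod n) (ZMod n) ℂ) - u • (mobiusLadder n).adjMatrix ℂ +
      (u ^ 2) • Matrix.diagonal (fun v => ((mobiusLadder n).degree v : ℂ) - 1) with hMdef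
  set F : Matrix (ZMod n) (ZMod n) ℂ := Matrix.of fun i k => ML.e ω (i * k) with hFdef
  set lam : ZMod n → ℂ := fun k =>
    1 + 2 * u ^ 2 - u * (ML.e ω k + ML.e ω (((n/2 : ℕ) : ZMod n) * k) + ML.e ω (-k))
    with hlamdef
  set G : Matrix (ZMod n) (ZMod n) ℂ := Matrix.of fun k j => ML.e ω (-(k * j)) with hGdef
  have hdeg : (fun v => ((mobiusLadder n).degree v : ℂ) - 1) = fun _ : ZMod n => (2 : ℂ) :=
    funext fun v => by rw [ML.deg hn hev]; norm_num
  -- Step 1 : M * F = F * diagonal lam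
  have hMF : M * F = F * Matrix.diagonal lam := by
    ext i k
    rw [Matrix.mul_apply, Matrix.mul_diagonal]
    have hterm : ∀ j, M i j * F j k =
        (if i = j then (1 + 2 * u ^ 2) * ML.e ω (j * k) else 0) +
        (if (mobiusLadder n).Adj i j then -u * ML.e ω (j * k) else 0) := by
      intro j
      rw [hMdef, hdeg]
      simp only [Matrix.sub_apply, Matrix.add_apply, Matrix.smul_apply, Matrix.one_apply,
        SimpleGraph.adjMatrix_apply, Matrix.diagonal_apply, smul_eq_mul, hFdef, Matrix.of_apply]
      split_ifs <;> ring
    rw [Finset.sum_congr rfl fun j _ => hterm j, Finset.sum_add_distrib,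
      Finset.sum_ite_eq Finset.univ i (fun j => (1 + 2*u^2) * ML.e ω (j * k))]
    have hnb : ∑ j : ZMod n, (if (mobiusLadder n).Adj i j then -u * ML.e ω (j * k) else 0) =
        ∑ j ∈ (mobiusLadder n).neighborFinset i, -u * ML.e ω (j * k) := by
      rw [SimpleGraph.neighborFinset_eq_filter, Finset.sum_filter]
    obtain ⟨hd1, hd2⟩ := ML.distinct hn hev i
    rw [hnb, ML.nbhd hn hev, Finset.sum_insert hd1, Finset.sum_insert hd2,
      Finset.sum_singleton]
    have E1 : ML.e ω ((i + 1) * k) = ML.e ω (i * k) * ML.e ω k := by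
      rw [show (i+1)*k = i*k + k by ring, ML.e_add h1]
    have E2 : ML.e ω ((i - 1) * k) = ML.e ω (i * k) * ML.e ω (-k) := by
      rw [show (i-1)*k = i*k + -k by ring, ML.e_add h1]
    have E3 : ML.e ω ((i + ((n/2:ℕ) : ZMod n)) * k)
        = ML.e ω (i * k) * ML.e ω (((n/2:ℕ) : ZMod n) * k) := by
      rw [show (i + ((n/2:ℕ):ZMod n))*k = i*k + ((n/2:ℕ):ZMod n)*k by ring, ML.e_add h1]
    simp only [if_pos (Finset.mem_univ i), hFdef, Matrix.of_apply, hlamdef, E1, E2, E3]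
    ring
  -- Step 2 : F * G = n • 1
  have hFG : F * G = (n : ℂ) • (1 : Matrix (ZMod n) (ZMod n) ℂ) := by
    ext i j
    rw [Matrix.mul_apply]
    have hterm : ∀ k, F i k * G k j = (ML.e ω (i - j)) ^ (ZMod.val k) := by
      intro k
      rw [hFdef, hGdef]
      simp only [Matrix.of_apply]
      rw [← ML.e_add h1, show i*k + -(k*j) = (i-j)*k by ring, ML.e_val_mul h1]
    rw [Finset.sum_congr rfl fun k _ => hterm k,
      ML.sum_val (fun m => (ML.e ω (i - j)) ^ m)]
    by_cases hij : i = j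
    · subst hij
      simp only [sub_self, ML.e_zero, one_pow, Finset.sum_const, Finset.card_range,
        nsmul_eq_mul, mul_one, Matrix.smul_apply, Matrix.one_apply_eq, smul_eq_mul]
    · have hvpos : 0 < (i - j).val :=
        Nat.pos_of_ne_zero fun h => (sub_ne_zero.mpr hij) ((ZMod.val_eq_zero _).mp h)
      have hz1 : ML.e ω (i - j) ≠ 1 := by
        unfold ML.e
        exact hω.pow_ne_one_of_pos_of_lt hvpos.ne' (ZMod.val_lt _)
      have hzn : (ML.e ω (i - j)) ^ n = 1 := by
        unfold ML.e
        rw [← pow_mul, mul_comm, pow_mul, h1, one_pow]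
      rw [geom_sum_eq hz1, hzn, sub_self, zero_div, Matrix.smul_apply,
        Matrix.one_apply_ne hij, smul_eq_mul, mul_zero]
  -- Step 3 : det F ≠ 0
  have hdetF : F.det ≠ 0 := by
    have : F.det * G.det = (n : ℂ) ^ n := by
      rw [← Matrix.det_mul, hFG, Matrix.det_smul, Matrix.det_one, mul_one, ZMod.card]
    refine left_ne_zero_of_mul (a := F.det) (b := G.det) ?_
    rw [this]
    exact pow_ne_zero _ (Nat.cast_ne_zero.mpr (NeZero.ne n))
  -- Step 4 : det M = prod of lam
  have hdet : M.det = ∏ k : ZMod n, lam k := by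
    have h := congrArg Matrix.det hMF
    rw [Matrix.det_mul, Matrix.det_mul, Matrix.det_diagonal] at h
    exact mul_right_cancel₀ hdetF (by rw [h]; ring)
  -- Step 5 : rewrite the product
  have hprod : ∏ k : ZMod n, lam k =
      ∏ k ∈ Finset.range n,
        (1 + 2 * u ^ 2 - u * (ω ^ k + ω ^ (k * (n / 2)) + ω ^ (k * (n - 1)))) := by
    rw [ML.prod_univ lam]
    refine Finset.prod_congr rfl fun m hm => ?_
    have e1 : ML.e ω ((m : ZMod n)) = ω ^ m := ML.e_nat h1 m
    have e2 : ML.e ω (((n/2:ℕ) : ZMod n) * (m : ZMod n)) = ω ^ (m * (n/2)) := by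
      rw [← Nat.cast_mul, ML.e_nat h1, Nat.mul_comm]
    have e3 : ML.e ω (-(m : ZMod n)) = ω ^ (m * (n - 1)) := by
      rw [show -((m : ZMod n)) = ((m * (n-1) : ℕ) : ZMod n) from by
        push_cast [Nat.cast_sub (show 1 ≤ n by omega)]
        rw [ZMod.natCast_self]; ring, ML.e_nat h1]
    rw [hlamdef]
    simp only [e1, e2, e3]
  have final : M.det = ∏ k ∈ Finset.range n,
      (1 + 2 * u ^ 2 - u * (ω ^ k + ω ^ (k * (n / 2)) + ω ^ (k * (n - 1)))) := by
    rw [hdet, hprod]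
  exact ⟨by rw [final], final⟩
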